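/- arXiv:2402.15417 — 7 statements merged into one kernel-verified Lean document; each statement's English description precedes it below -/
import Mathlib

section
/- For any rack X, the kernel of the canonical epimorphism ψ : As(X) → Inn(X) is contained in the center of As(X); indeed, g⁻¹ e_x g = e_{x·ψ(g)} holds in As(X) for every x ∈ X and every g ∈ As(X). -/
/-!  Core framework: racks/quandles with right operation, inner automorphism group
(with opposite composition, acting on the right), associated group. -/

universe u v

noncomputable section

/-- A rack: a set with a right-distributive binary operation whose right
translations are bijective. -/
structure RackStr (X : Type u) where
  op : X → X → X
  bij : ∀ y, Function.Bijective fun x => op x y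
  distrib : ∀ x y z, op (op x y) z = op (op x z) (op y z)

/-- A quandle: a rack which is idempotent. -/
structure QuandleStr (X : Type u) extends RackStr X where
  idem : ∀ x, op x x = x

namespace RackStr

variable {X : Type u} (R : RackStr X)

/-- The right translation `s_y : x ↦ x * y`, as a permutation. -/
def s (y : X) : Equiv.Perm X := Equiv.ofBijective _ (R.bij y)

@[simp] lemma s_apply (y x : X) : R.s y x = R.op x y := rfl

/-- The right translation, as an element of the opposite of the permutation group
(the inner automorphism group is equipped with the *opposite* composition,
so that it acts on `X` on the right). -/
def sop (y : X) : (Equiv.Perm X)ᵐᵒᵖ := MulOpposite.op (R.s y)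

/-- The inner automorphism group `Inn(X)`: the subgroup (of the permutation
group with opposite multiplication) generated by the right translations. -/
def Inn : Subgroup (Equiv.Perm X)ᵐᵒᵖ := Subgroup.closure (Set.range R.sop)

/-- The relations defining the associated group `As(X)`. -/
def rels : Set (FreeGroup X) :=
  { r | ∃ x y, r = FreeGroup.of x * FreeGroup.of y *
      (FreeGroup.of y * FreeGroup.of (R.op x y))⁻¹ }

/-- The associated group `As(X) = ⟨e_x (x ∈ X) ∣ e_x e_y = e_y e_{x*y}⟩`. -/
def As : Type u := PresentedGroup R.rels

instance : Group R.As := by unfold As; infer_instance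

/-- The generator `e_x` of the associated group. -/
def e (x : X) : R.As := PresentedGroup.of x

lemma sop_rel (x y : X) : R.sop x * R.sop y = R.sop y * R.sop (R.op x y) := by
  unfold sop
  rw [← MulOpposite.op_mul, ← MulOpposite.op_mul]
  congr 1
  ext a
  simp only [Equiv.Perm.mul_apply, s_apply]
  exact R.distrib a x y

/-- The canonical homomorphism `ψ` from the associated group, sending `e_x` to
`s_x`; its image is the inner automorphism group `Inn(X)`. -/
def psi : R.As →* (Equiv.Perm X)ᵐᵒᵖ :=
  PresentedGroup.toGroup (f := R.sop) (by
    rintro r ⟨x, y, rfl⟩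
    rw [map_mul, map_mul, map_inv, map_mul]
    simp only [FreeGroup.lift_apply_of]
    rw [mul_inv_eq_one]
    exact R.sop_rel x y)

@[simp] lemma psi_e (x : X) : R.psi (R.e x) = R.sop x :=
  PresentedGroup.toGroup.of _

/-- The right action of the associated group on `X` (through `ψ`). -/
def act (x : X) (g : R.As) : X := (R.psi g).unop x

@[simp] lemma act_one (x : X) : R.act x 1 = x := by simp [act]

lemma act_mul (x : X) (g h : R.As) : R.act x (g * h) = R.act (R.act x g) h := by
  simp [act, map_mul]

@[simp] lemma act_e (x y : X) : R.act x (R.e y) = R.op x y := by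
  simp [act, sop]

/-- The orbit equivalence relation of the action of the inner automorphism group
(equivalently, of the associated group) on `X`. -/
def orbSetoid : Setoid X where
  r a b := ∃ g : R.As, R.act a g = b
  iseqv := by
    constructor
    · exact fun a => ⟨1, by simp⟩
    · rintro a b ⟨g, rfl⟩
      exact ⟨g⁻¹, by rw [← R.act_mul, mul_inv_cancel, act_one]⟩
    · rintro a b c ⟨g, rfl⟩ ⟨h, rfl⟩
      exact ⟨g * h, R.act_mul a g h⟩

/-- The set of orbits (connected components) `O_X`. -/
def Orbits : Type u := Quotient R.orbSetoid

/-- The orbit of a point. -/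
def orb (x : X) : R.Orbits := Quotient.mk R.orbSetoid x

lemma orb_op (x y : X) : R.orb (R.op x y) = R.orb x :=
  (Quot.sound ⟨R.e y, by simp⟩).symm

/-- The abelianization homomorphism `α : As(X) → ℤ^{⊕ O_X}`, sending `e_x` to the
basis element indexed by the orbit of `x`. -/
def alpha : R.As →* Multiplicative (R.Orbits →₀ ℤ) :=
  PresentedGroup.toGroup
    (f := fun x => Multiplicative.ofAdd (Finsupp.single (R.orb x) 1)) (by
    rintro r ⟨x, y, rfl⟩
    rw [map_mul, map_mul, map_inv, map_mul]
    simp only [FreeGroup.lift_apply_of]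
    rw [mul_inv_eq_one, R.orb_op x y, mul_comm])

@[simp] lemma alpha_e (x : X) :
    R.alpha (R.e x) = Multiplicative.ofAdd (Finsupp.single (R.orb x) 1) :=
  PresentedGroup.toGroup.of _

/-- `α × ψ`. -/
def alphaPsi : R.As →* Multiplicative (R.Orbits →₀ ℤ) × (Equiv.Perm X)ᵐᵒᵖ :=
  R.alpha.prod R.psi

/-- `Inn̄(X)`, the image of `α × ψ`. -/
def InnBar : Subgroup (Multiplicative (R.Orbits →₀ ℤ) × (Equiv.Perm X)ᵐᵒᵖ) :=
  R.alphaPsi.range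

/-- `s̄_x = (α × ψ)(e_x)` as an element of `Inn̄(X)`. -/
def sbar (x : X) : R.InnBar := ⟨R.alphaPsi (R.e x), ⟨R.e x, rfl⟩⟩

/-- The group homomorphism `ε : As(X) → ℤ` sending every generator to `1`. -/
def epsAs : R.As →* Multiplicative ℤ :=
  PresentedGroup.toGroup (f := fun _ => Multiplicative.ofAdd (1 : ℤ)) (by
    rintro r ⟨x, y, rfl⟩
    rw [map_mul, map_mul, map_inv, map_mul]
    simp only [FreeGroup.lift_apply_of]
    rw [mul_inv_eq_one])

@[simp] lemma epsAs_e (x : X) : R.epsAs (R.e x) = Multiplicative.ofAdd (1 : ℤ) :=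
  PresentedGroup.toGroup.of _

/-- `ε × ψ`. -/
def epsPsi : R.As →* Multiplicative ℤ × (Equiv.Perm X)ᵐᵒᵖ :=
  R.epsAs.prod R.psi

/-- The augmentation `ε₀ : ℤ^{⊕ O_X} → ℤ` sending each basis element to `1`. -/
def eps0 : (R.Orbits →₀ ℤ) →+ ℤ :=
  Finsupp.liftAddHom fun _ => AddMonoidHom.id ℤ

/-- `ε̄` on the ambient group `ℤ^{⊕ O_X} × Perm(X)ᵐᵒᵖ`: the composite of the first
projection with `ε₀`.  `Inn̄₀(X)` is `Inn̄(X) ∩ Ker ε̄`. -/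
def epsBar : Multiplicative (R.Orbits →₀ ℤ) × (Equiv.Perm X)ᵐᵒᵖ →* Multiplicative ℤ :=
  (AddMonoidHom.toMultiplicative R.eps0).comp (MonoidHom.fst _ _)

end RackStr

/-- The subgroup of (the opposite of) the permutation group consisting of the
permutations fixing `x`. -/
def fixedSub {X : Type u} (x : X) : Subgroup (Equiv.Perm X)ᵐᵒᵖ where
  carrier := { σ | σ.unop x = x }
  one_mem' := rfl
  mul_mem' := by
    intro a b ha hb
    simp only [Set.mem_setOf_eq, MulOpposite.unop_mul, Equiv.Perm.mul_apply] at *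
    rw [ha, hb]
  inv_mem' := by
    intro a ha
    simp only [Set.mem_setOf_eq, MulOpposite.unop_inv] at *
    conv_lhs => rw [← ha]
    exact Equiv.symm_apply_apply _ _

namespace RackStr

variable {X : Type u} (R : RackStr X)

/-- The stabilizer of `x ∈ X` in the associated group. -/
def stabAs (x : X) : Subgroup R.As := Subgroup.comap R.psi (fixedSub x)

lemma mem_stabAs {x : X} {g : R.As} : g ∈ R.stabAs x ↔ R.act x g = x := Iff.rfl

/-- `X` is (algebraically) connected when the inner automorphism group acts
transitively, equivalently when the associated group does. -/
def IsConnected : Prop := ∀ x y : X, ∃ g : R.As, R.act x g = y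

/-- `Inn₀(X) = ψ(Ker ε)`, the image under `ψ` of the kernel of `ε`
(equivalently, the image of `Inn̄₀(X)` under the second projection). -/
def Inn0 : Subgroup (Equiv.Perm X)ᵐᵒᵖ := Subgroup.map R.psi R.epsAs.ker

end RackStr


namespace RackStr
variable {X : Type u} (R : RackStr X)

lemma e_rel (x y : X) : R.e x * R.e y = R.e y * R.e (R.op x y) := by
  have : (QuotientGroup.mk (FreeGroup.of x * FreeGroup.of y *
      (FreeGroup.of y * FreeGroup.of (R.op x y))⁻¹) :
      PresentedGroup R.rels) = 1 := by
    rw [QuotientGroup.eq_one_iff]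
    exact Subgroup.subset_normalClosure ⟨x, y, rfl⟩
  have h : R.e x * R.e y * (R.e y * R.e (R.op x y))⁻¹ = 1 := this
  rw [mul_inv_eq_one] at h
  exact h

lemma conj_e (x : X) (g : R.As) : g⁻¹ * R.e x * g = R.e (R.act x g) := by
  have hmem : g ∈ Subgroup.closure (Set.range R.e) := by
    have : Subgroup.closure (Set.range R.e) = ⊤ := PresentedGroup.closure_range_of _
    rw [this]; trivial
  revert x
  induction hmem using Subgroup.closure_induction with
  | mem g hg =>
    intro x
    obtain ⟨y, rfl⟩ := hg
    rw [act_e, mul_assoc, R.e_rel, ← mul_assoc, inv_mul_cancel, one_mul]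
  | one => intro x; simp
  | mul g h _ _ hg hh =>
    intro x
    have := hh (R.act x g)
    rw [act_mul, ← this, ← hg]
    group
  | inv g _ hg =>
    intro x
    have := hg (R.act x g⁻¹)
    rw [← act_mul, inv_mul_cancel, act_one] at this
    rw [← this]
    group

end RackStr

/-- For any rack `X`, the kernel of the canonical epimorphism
`ψ : As(X) → Inn(X)` is contained in the center of `As(X)`; indeed
`g⁻¹ e_x g = e_{x·ψ(g)}` for every `x ∈ X` and `g ∈ As(X)`. -/
theorem ker_psi_le_center (X : Type u) (R : RackStr X) :
    R.psi.ker ≤ Subgroup.center R.As ∧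
      ∀ (x : X) (g : R.As), g⁻¹ * R.e x * g = R.e (R.act x g) := by
  refine ⟨?_, R.conj_e⟩
  intro g hg
  rw [Subgroup.mem_center_iff]
  have key : ∀ x : X, R.e x * g = g * R.e x := by
    intro x
    have h1 := R.conj_e x g
    have hx : R.act x g = x := by
      simp [RackStr.act, MonoidHom.mem_ker.mp hg]
    rw [hx] at h1
    calc R.e x * g = g * (g⁻¹ * R.e x * g) := by group
      _ = g * R.e x := by rw [h1]
  intro h
  have hmem : h ∈ Subgroup.closure (Set.range R.e) := by
    have : Subgroup.closure (Set.range R.e) = ⊤ := PresentedGroup.closure_range_of _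
    rw [this]; trivial
  induction hmem using Subgroup.closure_induction with
  | mem h hh => obtain ⟨y, rfl⟩ := hh; exact key y
  | one => simp
  | mul a b _ _ ha hb => rw [mul_assoc, hb, ← mul_assoc, ha, mul_assoc]
  | inv a _ ha =>
    calc a⁻¹ * g = a⁻¹ * (g * a) * a⁻¹ := by group
      _ = a⁻¹ * (a * g) * a⁻¹ := by rw [← ha]
      _ = g * a⁻¹ := by group
end
end

section
/- For any rack X, the kernel of α×ψ : As(X) → ℤ^{⊕O_X} × Inn(X) is contained in the commutator subgroup of As(X). -/
/-!  Core framework: racks/quandles with right operation, inner automorphism group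
(with opposite composition, acting on the right), associated group. -/

universe u v

noncomputable section

namespace RackStr

variable {X : Type u} (R : RackStr X)

lemma abOf_act (g : R.As) : ∀ x : X,
    Abelianization.of (R.e (R.act x g)) = Abelianization.of (R.e x) := by
  have hg : g ∈ Subgroup.closure (Set.range (R.e)) := by
    have := PresentedGroup.closure_range_of R.rels
    exact (Subgroup.eq_top_iff' _).mp this g
  induction hg using Subgroup.closure_induction with
  | mem g hgm =>
    obtain ⟨y, rfl⟩ := hgm
    intro x
    rw [R.act_e]
    have := congrArg Abelianization.of (R.e_rel x y)
    simp only [map_mul] at this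
    rw [mul_comm (Abelianization.of (R.e y))] at this
    exact (mul_right_cancel this).symm
  | one => simp
  | mul a b _ _ ha hb => intro x; rw [R.act_mul, hb, ha]
  | inv a _ ha =>
    intro x
    have := ha (R.act x a⁻¹)
    rw [← R.act_mul, inv_mul_cancel, R.act_one] at this
    exact this.symm

/-- The orbit-wise map to the abelianization. -/
def orbAb : R.Orbits → Abelianization R.As :=
  Quotient.lift (fun x => Abelianization.of (R.e x)) (by
    rintro a b ⟨g, rfl⟩
    exact (R.abOf_act g a).symm)

/-- Inverse-direction hom `β`. -/
def beta : Multiplicative (R.Orbits →₀ ℤ) →* Abelianization R.As :=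
  AddMonoidHom.toMultiplicativeLeft
    (Finsupp.liftAddHom fun o => zmultiplesHom _ (Additive.ofMul (R.orbAb o)))

lemma beta_alpha (g : R.As) : R.beta (R.alpha g) = Abelianization.of g := by
  have : R.beta.comp R.alpha = Abelianization.of := by
    apply PresentedGroup.ext
    intro x
    show R.beta (R.alpha (R.e x)) = Abelianization.of (R.e x)
    rw [R.alpha_e]
    show R.beta (Multiplicative.ofAdd (Finsupp.single (R.orb x) 1)) = _
    simp only [beta]
    erw [Finsupp.liftAddHom_apply_single]
    rfl
  exact congrFun (congrArg (fun f => f.toFun) this) g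

end RackStr

/-- For any rack `X`, the kernel of
`α × ψ : As(X) → ℤ^{⊕O_X} × Inn(X)` is contained in the commutator subgroup of
`As(X)`. -/
theorem ker_alphaPsi_le_commutator (X : Type u) (R : RackStr X) :
    R.alphaPsi.ker ≤ commutator R.As := by
  intro g hg
  have h1 : R.alpha g = 1 := congrArg Prod.fst hg
  have : Abelianization.of g = 1 := by rw [← R.beta_alpha, h1, map_one]
  exact (QuotientGroup.eq_one_iff g).mp this
end
end

section
/- Let X be a quandle and E ⊆ X any set of representatives of the orbit set O_X. Then in H₂(Inn̄(X); ℤ), the subgroup generated by the homology classes of the 2-cycles [s̄_x | f] − [f | s̄_x] for x ∈ X and f ∈ Stab_{Inn̄(X)}(x) equals the subgroup generated by the homology classes of the 2-cycles [s̄_{x₀} | f] − [f | s̄_{x₀}] for x₀ ∈ E and f ∈ Stab_{Inn̄₀(X)}(x₀). -/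
/-!  Core framework: racks/quandles with right operation, inner automorphism group
(with opposite composition, acting on the right), associated group. -/

universe u v

noncomputable section

/-! Second group homology with trivial `ℤ` coefficients, via the inhomogeneous
bar resolution. -/

namespace GroupH2

variable (G : Type v) [Group G]

/-- The differential `d₂ : C₂ → C₁`, `[g|h] ↦ [h] - [gh] + [g]`. -/
def d2 : ((G × G) →₀ ℤ) →ₗ[ℤ] (G →₀ ℤ) :=
  Finsupp.lift _ ℤ _ fun p =>
    Finsupp.single p.2 1 - Finsupp.single (p.1 * p.2) 1 + Finsupp.single p.1 1

/-- The differential `d₃ : C₃ → C₂`,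
`[g|h|k] ↦ [h|k] - [gh|k] + [g|hk] - [g|h]`. -/
def d3 : ((G × G × G) →₀ ℤ) →ₗ[ℤ] ((G × G) →₀ ℤ) :=
  Finsupp.lift _ ℤ _ fun t =>
    Finsupp.single (t.2.1, t.2.2) 1 - Finsupp.single (t.1 * t.2.1, t.2.2) 1
      + Finsupp.single (t.1, t.2.1 * t.2.2) 1 - Finsupp.single (t.1, t.2.1) 1

/-- The group of (inhomogeneous) 2-cycles. -/
def Z2 : Submodule ℤ ((G × G) →₀ ℤ) := LinearMap.ker (d2 G)

/-- The group of 2-boundaries, as a submodule of the 2-cycles. -/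
def B2 : Submodule ℤ (Z2 G) := Submodule.comap (Z2 G).subtype (LinearMap.range (d3 G))

/-- The second group homology `H₂(G;ℤ)` with trivial integer coefficients. -/
def H2 := Z2 G ⧸ B2 G

instance : AddCommGroup (H2 G) := by unfold H2; infer_instance
instance : Module ℤ (H2 G) := by unfold H2; infer_instance

/-- The homology class of a 2-cycle. -/
def H2mk : Z2 G →ₗ[ℤ] H2 G := (B2 G).mkQ

variable {G}

/-- The chain `[g|h] - [h|g]`; when `g` and `h` commute this is a cycle whose
homology class is the Pontryagin product `⟨g,h⟩`. -/
def pchain (g h : G) : (G × G) →₀ ℤ :=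
  Finsupp.single (g, h) 1 - Finsupp.single (h, g) 1

end GroupH2

namespace GroupH2
variable {G : Type v} [Group G]

-- new lemmas
lemma d2_single (p : G × G) :
    d2 G (Finsupp.single p 1) =
      Finsupp.single p.2 1 - Finsupp.single (p.1 * p.2) 1 + Finsupp.single p.1 1 := by
  simp [d2, Finsupp.lift_apply, Finsupp.sum_single_index]

lemma d3_single (t : G × G × G) :
    d3 G (Finsupp.single t 1) =
      Finsupp.single (t.2.1, t.2.2) 1 - Finsupp.single (t.1 * t.2.1, t.2.2) 1
        + Finsupp.single (t.1, t.2.1 * t.2.2) 1 - Finsupp.single (t.1, t.2.1) 1 := by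
  simp [d3, Finsupp.lift_apply, Finsupp.sum_single_index]

lemma pchain_mem_Z2 {g h : G} (hc : g * h = h * g) : pchain g h ∈ Z2 G := by
  simp only [Z2, LinearMap.mem_ker, pchain, map_sub, d2_single]
  rw [hc]; abel

lemma comm_of_pchain_mem {g h : G} (hm : pchain g h ∈ Z2 G) : g * h = h * g := by
  by_contra hne
  simp only [Z2, LinearMap.mem_ker, pchain, map_sub, d2_single] at hm
  have h1 := DFunLike.congr_fun hm (g * h)
  classical
  simp only [Finsupp.coe_sub, Finsupp.coe_add, Pi.sub_apply, Pi.add_apply,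
    Finsupp.zero_apply, Finsupp.coe_zero, Finsupp.single_apply] at h1
  split_ifs at h1 <;> try omega
  all_goals exact hne (Eq.symm ‹h * g = g * h›)

open Finsupp in
lemma bilin_boundary {g h k : G} (hh : g * h = h * g) (hk : g * k = k * g) :
    pchain g (h * k) - pchain g h - pchain g k ∈ LinearMap.range (d3 G) := by
  refine ⟨Finsupp.single (g, h, k) 1 - Finsupp.single (h, g, k) 1
      + Finsupp.single (h, k, g) 1, ?_⟩
  simp only [map_add, map_sub, d3_single, pchain]
  rw [hh, hk]
  abel

open Finsupp in
lemma conj_boundary {g h g' h' c : G} (hgh : g * h = h * g) (hg'h' : g' * h' = h' * g')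
    (hg : c * g = g' * c) (hh : c * h = h' * c) :
    pchain g' h' - pchain g h ∈ LinearMap.range (d3 G) := by
  refine ⟨-Finsupp.single (c, g, h) 1 + Finsupp.single (g', c, h) 1
      - Finsupp.single (g', h', c) 1 + Finsupp.single (c, h, g) 1
      - Finsupp.single (h', c, g) 1 + Finsupp.single (h', g', c) 1, ?_⟩
  simp only [map_add, map_sub, map_neg, d3_single, pchain]
  rw [hg, hh, hgh, hg'h']
  abel

lemma pchain_one_boundary (g : G) : pchain g 1 ∈ LinearMap.range (d3 G) := by
  refine ⟨-Finsupp.single (g, 1, 1) 1 - Finsupp.single (1, 1, g) 1, ?_⟩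
  simp only [map_sub, map_neg, d3_single, pchain, mul_one, one_mul]
  abel

lemma H2mk_eq_of_sub_mem {z w : Z2 G}
    (h : (z : (G × G) →₀ ℤ) - (w : (G × G) →₀ ℤ) ∈ LinearMap.range (d3 G)) :
    H2mk G z = H2mk G w := by
  exact (Submodule.Quotient.eq _).mpr h

lemma H2mk_eq_zero_of_mem {z : Z2 G}
    (h : (z : (G × G) →₀ ℤ) ∈ LinearMap.range (d3 G)) :
    H2mk G z = 0 := by
  exact (Submodule.Quotient.mk_eq_zero _).mpr h

open scoped Classical in
/-- The Pontryagin class of a pair of (commuting) elements. -/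
def pclass (g h : G) : H2 G :=
  if hc : g * h = h * g then H2mk G ⟨pchain g h, pchain_mem_Z2 hc⟩ else 0

lemma pclass_of (g h : G) (hc : g * h = h * g) :
    pclass g h = H2mk G ⟨pchain g h, pchain_mem_Z2 hc⟩ := by
  unfold pclass; rw [dif_pos hc]

lemma pclass_eq_H2mk {g h : G} (z : Z2 G) (hz : (z : (G × G) →₀ ℤ) = pchain g h) :
    H2mk G z = pclass g h := by
  have hc : g * h = h * g := comm_of_pchain_mem (hz ▸ z.2)
  rw [pclass_of g h hc]
  congr 1
  exact Subtype.ext hz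

lemma pclass_mul {g h k : G} (hh : g * h = h * g) (hk : g * k = k * g) :
    pclass g (h * k) = pclass g h + pclass g k := by
  have hc : g * (h * k) = (h * k) * g := by
    rw [← mul_assoc, hh, mul_assoc, hk, mul_assoc]
  rw [pclass_of g (h*k) hc, pclass_of g h hh, pclass_of g k hk, ← map_add]
  apply H2mk_eq_of_sub_mem
  have := bilin_boundary (G := G) hh hk
  simpa [sub_sub] using this

lemma pclass_one (g : G) : pclass g 1 = 0 := by
  rw [pclass_of g 1 (by rw [mul_one, one_mul])]
  exact H2mk_eq_zero_of_mem (pchain_one_boundary g)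

lemma pclass_self (g : G) : pclass g g = 0 := by
  rw [pclass_of g g rfl]
  have : (⟨pchain g g, pchain_mem_Z2 rfl⟩ : Z2 G) = 0 := by
    apply Subtype.ext; simp [pchain]
  rw [this, map_zero]

lemma pclass_inv {g h : G} (hh : g * h = h * g) : pclass g h⁻¹ = - pclass g h := by
  have hk : g * h⁻¹ = h⁻¹ * g := ((show Commute g h from hh).inv_right).eq
  have := pclass_mul hh hk
  rw [mul_inv_cancel, pclass_one] at this
  exact eq_neg_of_add_eq_zero_right this.symm

lemma pclass_zpow (g : G) : ∀ n : ℤ, pclass g (g ^ n) = 0 := by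
  intro n
  induction n using Int.induction_on with
  | zero => rw [zpow_zero]; exact pclass_one g
  | succ n ih =>
      rw [zpow_add_one,
        pclass_mul (((Commute.refl g).zpow_right n).eq) rfl, ih, pclass_self,
        add_zero]
  | pred n ih =>
      rw [zpow_sub_one,
        pclass_mul (((Commute.refl g).zpow_right (-n)).eq)
          (((Commute.refl g).inv_right).eq), ih,
        pclass_inv rfl, pclass_self, zero_add, neg_zero]

lemma pclass_conj {g h g' h' c : G} (hgh : g * h = h * g)
    (hg : c * g = g' * c) (hh : c * h = h' * c) : pclass g' h' = pclass g h := by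
  have hg' : g' = c * g * c⁻¹ := by rw [hg, mul_inv_cancel_right]
  have hh' : h' = c * h * c⁻¹ := by rw [hh, mul_inv_cancel_right]
  have hgh' : g' * h' = h' * g' := by
    rw [hg', hh']
    group
    rw [mul_assoc c, hgh, ← mul_assoc]
  rw [pclass_of g' h' hgh', pclass_of g h hgh]
  exact H2mk_eq_of_sub_mem (conj_boundary hgh hgh' hg hh)

end GroupH2



namespace RackStr
variable {X : Type u} (R : RackStr X)

lemma e_act (g : R.As) (x : X) : R.e (R.act x g) = g⁻¹ * R.e x * g := by
  induction g using QuotientGroup.induction_on with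
  | H w =>
    induction w using FreeGroup.induction_on generalizing x with
    | C1 => exact (by simp : R.e (R.act x 1) = 1⁻¹ * R.e x * 1)
    | of y =>
        have hpy : (QuotientGroup.mk (FreeGroup.of y : FreeGroup X) : R.As) = R.e y := rfl
        rw [hpy, R.act_e]
        rw [eq_comm, mul_assoc, inv_mul_eq_iff_eq_mul]
        exact R.e_rel x y
    | inv_of y ih =>
        rw [QuotientGroup.mk_inv]
        set g : R.As := QuotientGroup.mk (FreeGroup.of y) with hg
        have h1 := ih (R.act x g⁻¹)
        rw [← R.act_mul, inv_mul_cancel, R.act_one] at h1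
        change R.e (R.act x g⁻¹) = (g⁻¹ : R.As)⁻¹ * R.e x * (g⁻¹ : R.As)
        rw [inv_inv]
        rw [h1]
        group
    | mul u v ihu ihv =>
        rw [QuotientGroup.mk_mul]
        set a : R.As := QuotientGroup.mk u with ha
        set b : R.As := QuotientGroup.mk v with hb
        change R.e (R.act x (a * b)) = (a * b)⁻¹ * R.e x * (a * b)
        rw [R.act_mul, ihv, ihu, mul_inv_rev]
        group
end RackStr

namespace RackStr
variable {X : Type u} (R : RackStr X)

/-- The action of `Inn̄(X)` on `X`. -/
def aact (x : X) (u : R.InnBar) : X := (u.val.2).unop x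

lemma aact_mul (x : X) (u v : R.InnBar) :
    R.aact x (u * v) = R.aact (R.aact x u) v := rfl

lemma aact_mk (x : X) (g : R.As) (hg : R.alphaPsi g ∈ R.InnBar) :
    R.aact x ⟨R.alphaPsi g, hg⟩ = R.act x g := rfl

lemma aact_sbar (x y : X) : R.aact x (R.sbar y) = R.op x y := by
  show R.act x (R.e y) = R.op x y
  simp

lemma aact_mk_inv (x : X) (g : R.As) (hg : R.alphaPsi g ∈ R.InnBar) :
    R.aact x (⟨R.alphaPsi g, hg⟩ : R.InnBar)⁻¹ = R.act x g⁻¹ := by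
  show ((R.alphaPsi g)⁻¹.2).unop x = R.act x g⁻¹
  rw [← map_inv]
  rfl

lemma epsBar_sbar (x : X) :
    R.epsBar ((R.sbar x : R.InnBar) :
      Multiplicative (R.Orbits →₀ ℤ) × (Equiv.Perm X)ᵐᵒᵖ) = Multiplicative.ofAdd 1 := by
  show R.epsBar (R.alphaPsi (R.e x)) = Multiplicative.ofAdd 1
  simp [epsBar, alphaPsi, eps0, MonoidHom.prod_apply]

end RackStr


open GroupH2 in
/-- **Lemma simp-lem.**  For a quandle `X` and any representative
set `E` of the orbit set `O_X`, the subgroup of `H₂(Inn̄(X);ℤ)` generated by the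
classes of the cycles `[s̄_x|f] - [f|s̄_x]` (`x ∈ X`, `f ∈ Stab_{Inn̄(X)}(x)`)
equals the one generated by those for `x₀ ∈ E` and `f ∈ Stab_{Inn̄₀(X)}(x₀)`. -/
theorem pontryagin_span_eq_of_reps (X : Type u) (Q : QuandleStr X)
    (E : Set X) (hE : ∀ x : X, ∃! y : X, y ∈ E ∧ Q.toRackStr.orb y = Q.toRackStr.orb x) :
    letI R := Q.toRackStr
    Submodule.span ℤ
      { c : H2 R.InnBar | ∃ (x : X) (f : R.InnBar),
          (f : Multiplicative (R.Orbits →₀ ℤ) × (Equiv.Perm X)ᵐᵒᵖ).2.unop x = x ∧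
          ∃ z : Z2 R.InnBar,
            (z : (R.InnBar × R.InnBar) →₀ ℤ) = pchain (R.sbar x) f ∧
            c = H2mk R.InnBar z } =
    Submodule.span ℤ
      { c : H2 R.InnBar | ∃ (x₀ : X) (f : R.InnBar), x₀ ∈ E ∧
          (f : Multiplicative (R.Orbits →₀ ℤ) × (Equiv.Perm X)ᵐᵒᵖ).2.unop x₀ = x₀ ∧
          R.epsBar (f : Multiplicative (R.Orbits →₀ ℤ) × (Equiv.Perm X)ᵐᵒᵖ) = 1 ∧
          ∃ z : Z2 R.InnBar,
            (z : (R.InnBar × R.InnBar) →₀ ℤ) = pchain (R.sbar x₀) f ∧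
            c = H2mk R.InnBar z } := by
  set R := Q.toRackStr with hR
  apply le_antisymm
  · rw [Submodule.span_le]
    rintro c ⟨x, f, hfix, z, hz, rfl⟩
    have hcomm : R.sbar x * f = f * R.sbar x := comm_of_pchain_mem (hz ▸ z.2)
    obtain ⟨x₀, ⟨hx₀E, hx₀orb⟩, -⟩ := hE x
    obtain ⟨g, hgx⟩ : ∃ g : R.As, R.act x₀ g = x := Quotient.exact hx₀orb
    set cc : R.InnBar := ⟨R.alphaPsi g, g, rfl⟩ with hcc
    have easx : R.e x = g⁻¹ * R.e x₀ * g := by rw [← hgx, R.e_act]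
    have eq1 : cc * R.sbar x = R.sbar x₀ * cc := by
      apply Subtype.ext
      show R.alphaPsi g * R.alphaPsi (R.e x) = R.alphaPsi (R.e x₀) * R.alphaPsi g
      rw [← map_mul, ← map_mul, easx]
      congr 1
      group
    set f' : R.InnBar := cc * f * cc⁻¹ with hf'
    have eq2 : cc * f = f' * cc := by rw [hf', inv_mul_cancel_right]
    have hfix' : R.aact x₀ f' = x₀ := by
      have h1 : R.aact x₀ cc = x := hgx
      have h2 : R.aact x f = x := hfix
      have h3 : R.aact x cc⁻¹ = x₀ := (R.aact_mk_inv x g cc.2).trans (by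
        rw [← hgx, ← R.act_mul, mul_inv_cancel, R.act_one])
      rw [hf', R.aact_mul, R.aact_mul, h1, h2, h3]
    have hconj : ∀ u v : R.InnBar, (cc*u*cc⁻¹) * (cc*v*cc⁻¹) = cc*(u*v)*cc⁻¹ := by
      intro u v; group
    have hsx₀ : R.sbar x₀ = cc * R.sbar x * cc⁻¹ := by
      rw [eq1, mul_inv_cancel_right]
    have hcomm' : R.sbar x₀ * f' = f' * R.sbar x₀ := by
      rw [hsx₀, hf', hconj, hconj, hcomm]
    set m : ℤ := Multiplicative.toAdd (R.epsBar (f' :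
      Multiplicative (R.Orbits →₀ ℤ) × (Equiv.Perm X)ᵐᵒᵖ)) with hm
    set f'' : R.InnBar := (R.sbar x₀) ^ (-m) * f' with hf''
    have hresto : f' = (R.sbar x₀) ^ m * f'' := by
      rw [hf'', ← mul_assoc, ← zpow_add, add_neg_cancel, zpow_zero, one_mul]
    have hcp : ∀ n : ℤ, R.sbar x₀ * (R.sbar x₀) ^ n = (R.sbar x₀) ^ n * R.sbar x₀ :=
      fun n => ((Commute.refl (R.sbar x₀)).zpow_right n).eq
    have hcomm'' : R.sbar x₀ * f'' = f'' * R.sbar x₀ := by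
      rw [hf'', ← mul_assoc, hcp (-m), mul_assoc, hcomm', ← mul_assoc]
    -- fixing of f''
    have hfixsx₀ : R.aact x₀ (R.sbar x₀) = x₀ := by
      rw [R.aact_sbar]; exact Q.idem x₀
    have hfix'' : R.aact x₀ f'' = x₀ := by
      set K : Subgroup R.InnBar :=
        Subgroup.comap ((MonoidHom.snd (Multiplicative (R.Orbits →₀ ℤ))
          ((Equiv.Perm X)ᵐᵒᵖ)).comp R.InnBar.subtype) (fixedSub x₀) with hK
      have hmem : ∀ u : R.InnBar, u ∈ K ↔ R.aact x₀ u = x₀ := fun u => Iff.rfl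
      rw [← hmem]
      exact mul_mem (zpow_mem ((hmem _).mpr hfixsx₀) (-m)) ((hmem _).mpr hfix')
    -- epsBar of f''
    have hepsf'' : R.epsBar (f'' :
        Multiplicative (R.Orbits →₀ ℤ) × (Equiv.Perm X)ᵐᵒᵖ) = 1 := by
      have hcoe : (f'' : Multiplicative (R.Orbits →₀ ℤ) × (Equiv.Perm X)ᵐᵒᵖ) =
          ((R.sbar x₀ : Multiplicative (R.Orbits →₀ ℤ) × (Equiv.Perm X)ᵐᵒᵖ)) ^ (-m) *
          (f' : Multiplicative (R.Orbits →₀ ℤ) × (Equiv.Perm X)ᵐᵒᵖ) := rfl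
      rw [hcoe, map_mul, map_zpow, R.epsBar_sbar]
      have h5 : Multiplicative.ofAdd m = R.epsBar (f' :
          Multiplicative (R.Orbits →₀ ℤ) × (Equiv.Perm X)ᵐᵒᵖ) := by
        rw [hm, ofAdd_toAdd]
      rw [← h5, ← ofAdd_zsmul, ← ofAdd_add, smul_eq_mul]
      simp
    -- homology computation
    have hc1 : H2mk R.InnBar z = pclass (R.sbar x) f := pclass_eq_H2mk z hz
    have hc2 : pclass (R.sbar x₀) f' = pclass (R.sbar x) f :=
      pclass_conj hcomm eq1 eq2
    have hc3 : pclass (R.sbar x₀) f' = pclass (R.sbar x₀) f'' := by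
      rw [hresto, pclass_mul (hcp m) hcomm'', pclass_zpow, zero_add]
    have hc4 : H2mk R.InnBar z =
        H2mk R.InnBar ⟨pchain (R.sbar x₀) f'', pchain_mem_Z2 hcomm''⟩ := by
      rw [hc1, ← hc2, hc3, pclass_of _ _ hcomm'']
    rw [hc4]
    apply Submodule.subset_span
    exact ⟨x₀, f'', hx₀E, hfix'', hepsf'',
      ⟨pchain (R.sbar x₀) f'', pchain_mem_Z2 hcomm''⟩, rfl, rfl⟩
  · apply Submodule.span_mono
    rintro c ⟨x₀, f, hE0, hfix, heps, z, hz, rfl⟩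
    exact ⟨x₀, f, hfix, z, hz, rfl⟩
end
end

section
/- Let G be a group, φ an automorphism of G, and H the subgroup of G generated by the elements φ(g⁻¹)g for all g ∈ G. Then every f ∈ Inn₀(Q_{G,φ}) acts on Q_{G,φ} as right multiplication by f(1_G), i.e., f(x) = x·f(1_G) for all x ∈ G, and the map f ↦ f(1_G) is a group isomorphism from Inn₀(Q_{G,φ}) onto H. -/
/-!  Core framework: racks/quandles with right operation, inner automorphism group
(with opposite composition, acting on the right), associated group. -/

universe u v

noncomputable section

/-! Generalized Alexander quandles `Q_{G,φ}`. -/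

section GenAlexander

variable {G : Type u} [Group G] (φ : G ≃* G)

/-- The generalized Alexander quandle `Q_{G,φ}`: the set `G` with
`x * y = φ(xy⁻¹)y`. -/
def genAlexander : QuandleStr G where
  op x y := φ (x * y⁻¹) * y
  bij y := (((Equiv.mulRight y⁻¹).trans φ.toEquiv).trans (Equiv.mulRight y)).bijective
  distrib x y z := by
    show φ (φ (x * y⁻¹) * y * z⁻¹) * z =
      φ (φ (x * z⁻¹) * z * (φ (y * z⁻¹) * z)⁻¹) * (φ (y * z⁻¹) * z)
    simp only [map_mul, map_inv, mul_inv_rev]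
    group
  idem x := by
    show φ (x * x⁻¹) * x = x
    simp

/-- The subgroup `H` of `G` generated by the elements `φ(g⁻¹)g`. -/
def genAlexSubgroup : Subgroup G :=
  Subgroup.closure { h : G | ∃ g : G, h = φ g⁻¹ * g }

end GenAlexander

section Proof11

variable {G : Type u} [Group G] (φ : G ≃* G)

/-- `φ` as an element of `MulAut G`, so that we can take integer powers. -/
def phiAut : MulAut G := φ

lemma phiAut_pow_comp (m n : ℤ) (x : G) :
    (phiAut φ ^ m) ((phiAut φ ^ n) x) = (phiAut φ ^ (m + n)) x := by
  rw [zpow_add]; rfl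

lemma genAlex_op (x y : G) :
    (genAlexander φ).toRackStr.op x y = φ (x * y⁻¹) * y := rfl

lemma genAlex_act_e (x y : G) :
    (genAlexander φ).toRackStr.act x ((genAlexander φ).toRackStr.e y)
      = φ (x * y⁻¹) * y := by
  rw [RackStr.act_e]; rfl

/-- The main structural formula: every element of the associated group acts as
`x ↦ φ^{ε(g)}(x) · (1 ⋅ g)`. -/
lemma genAlex_act_eq : ∀ g : (genAlexander φ).toRackStr.As, ∀ x : G,
    (genAlexander φ).toRackStr.act x g
      = (phiAut φ ^ Multiplicative.toAdd ((genAlexander φ).toRackStr.epsAs g)) x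
        * (genAlexander φ).toRackStr.act 1 g := by
  set R := (genAlexander φ).toRackStr with hR
  set ψ := phiAut φ with hψ
  let K : Subgroup R.As :=
  { carrier := {g | ∀ x, R.act x g = (ψ ^ Multiplicative.toAdd (R.epsAs g)) x * R.act 1 g}
    one_mem' := by
      intro x
      simp [R.act_one]
    mul_mem' := by
      intro a b ha hb x
      have hab : R.act x (a * b)
          = (ψ ^ Multiplicative.toAdd (R.epsAs b)) ((ψ ^ Multiplicative.toAdd (R.epsAs a)) x)
            * ((ψ ^ Multiplicative.toAdd (R.epsAs b)) (R.act 1 a) * R.act 1 b) := by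
        rw [R.act_mul, ha x, hb ((ψ ^ Multiplicative.toAdd (R.epsAs a)) x * R.act 1 a),
          map_mul, mul_assoc]
      have hab1 : R.act 1 (a * b)
          = (ψ ^ Multiplicative.toAdd (R.epsAs b)) (R.act 1 a) * R.act 1 b := by
        rw [R.act_mul, hb (R.act 1 a)]
      rw [hab, hab1, phiAut_pow_comp, map_mul, toAdd_mul, add_comm]
    inv_mem' := by
      intro a ha
      set n := Multiplicative.toAdd (R.epsAs a) with hn
      set c := R.act 1 a with hc
      have key : ∀ x : G, (ψ ^ n) (R.act x a⁻¹) * c = x := by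
        intro x
        calc (ψ ^ n) (R.act x a⁻¹) * c = R.act (R.act x a⁻¹) a := (ha _).symm
        _ = x := by rw [← R.act_mul, inv_mul_cancel, R.act_one]
      have h2 : ∀ x : G, R.act x a⁻¹ = (ψ ^ (-n)) (x * c⁻¹) := by
        intro x
        apply (ψ ^ n).injective
        rw [phiAut_pow_comp, add_neg_cancel]
        have : (ψ ^ n) (R.act x a⁻¹) = x * c⁻¹ := eq_mul_inv_of_mul_eq (key x)
        rw [this]
        rfl
      intro x
      have hεinv : Multiplicative.toAdd (R.epsAs a⁻¹) = -n := by
        rw [map_inv, toAdd_inv]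
      rw [h2 x, h2 1, hεinv, map_mul, one_mul] }
  have hK : ∀ y : G, R.e y ∈ K := by
    intro y x
    rw [genAlex_act_e, genAlex_act_e, R.epsAs_e, toAdd_ofAdd, zpow_one, one_mul,
      map_mul, mul_assoc]
    rfl
  have htop : Subgroup.closure (Set.range R.e) = ⊤ :=
    PresentedGroup.closure_range_of _
  intro g
  have hg : g ∈ Subgroup.closure (Set.range R.e) := htop ▸ Subgroup.mem_top g
  exact (Subgroup.closure_le K).mpr (by rintro _ ⟨y, rfl⟩; exact hK y) hg

lemma genAlexSubgroup_phi_mem : ∀ h ∈ genAlexSubgroup φ, φ h ∈ genAlexSubgroup φ := by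
  intro h hh
  refine Subgroup.closure_induction ?_ ?_ ?_ ?_ hh
  · rintro x ⟨g, rfl⟩
    rw [map_mul]
    exact Subgroup.subset_closure ⟨φ g, by rw [map_inv, map_inv]⟩
  · simpa using (genAlexSubgroup φ).one_mem
  · intro x y _ _ hx hy
    rw [map_mul]; exact (genAlexSubgroup φ).mul_mem hx hy
  · intro x _ hx
    rw [map_inv]; exact (genAlexSubgroup φ).inv_mem hx

lemma genAlexSubgroup_phisymm_mem :
    ∀ h ∈ genAlexSubgroup φ, φ.symm h ∈ genAlexSubgroup φ := by
  intro h hh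
  refine Subgroup.closure_induction ?_ ?_ ?_ ?_ hh
  · rintro x ⟨g, rfl⟩
    rw [map_mul, MulEquiv.symm_apply_apply]
    exact Subgroup.subset_closure ⟨φ.symm g,
      by rw [map_inv, MulEquiv.apply_symm_apply]⟩
  · simpa using (genAlexSubgroup φ).one_mem
  · intro x y _ _ hx hy
    rw [map_mul]; exact (genAlexSubgroup φ).mul_mem hx hy
  · intro x _ hx
    rw [map_inv]; exact (genAlexSubgroup φ).inv_mem hx

lemma genAlexSubgroup_zpow_mem (n : ℤ) :
    ∀ h ∈ genAlexSubgroup φ, (phiAut φ ^ n) h ∈ genAlexSubgroup φ := by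
  induction n using Int.induction_on with
  | zero => intro h hh; simpa using hh
  | succ k ih =>
    intro h hh
    have : (phiAut φ ^ ((k : ℤ) + 1)) h = (phiAut φ ^ (k : ℤ)) (φ h) := by
      rw [zpow_add, zpow_one]; rfl
    rw [this]
    exact ih _ (genAlexSubgroup_phi_mem φ h hh)
  | pred k ih =>
    intro h hh
    have : (phiAut φ ^ (-(k : ℤ) - 1)) h = (phiAut φ ^ (-(k : ℤ))) (φ.symm h) := by
      have e1 : (-(k : ℤ) - 1) = -(k : ℤ) + (-1) := by ring
      rw [e1, zpow_add, zpow_neg_one]; rfl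
    rw [this]
    exact ih _ (genAlexSubgroup_phisymm_mem φ h hh)

lemma genAlex_act_one_mem :
    ∀ g : (genAlexander φ).toRackStr.As,
      (genAlexander φ).toRackStr.act 1 g ∈ genAlexSubgroup φ := by
  set R := (genAlexander φ).toRackStr with hR
  let L : Subgroup R.As :=
  { carrier := {g | R.act 1 g ∈ genAlexSubgroup φ}
    one_mem' := by
      show R.act 1 1 ∈ genAlexSubgroup φ
      rw [R.act_one]; exact (genAlexSubgroup φ).one_mem
    mul_mem' := by
      intro a b ha hb
      show R.act 1 (a * b) ∈ genAlexSubgroup φ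
      rw [R.act_mul, genAlex_act_eq φ b (R.act 1 a)]
      exact (genAlexSubgroup φ).mul_mem (genAlexSubgroup_zpow_mem φ _ _ ha) hb
    inv_mem' := by
      intro a ha
      show R.act 1 a⁻¹ ∈ genAlexSubgroup φ
      set n := Multiplicative.toAdd (R.epsAs a) with hn
      have key : (phiAut φ ^ n) (R.act 1 a⁻¹) * R.act 1 a = 1 := by
        calc (phiAut φ ^ n) (R.act 1 a⁻¹) * R.act 1 a
            = R.act (R.act 1 a⁻¹) a := (genAlex_act_eq φ a _).symm
        _ = 1 := by rw [← R.act_mul, inv_mul_cancel, R.act_one]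
      have h2 : R.act 1 a⁻¹ = (phiAut φ ^ (-n)) ((R.act 1 a)⁻¹) := by
        apply (phiAut φ ^ n).injective
        rw [phiAut_pow_comp, add_neg_cancel,
          eq_inv_of_mul_eq_one_left key]
        rw [zpow_zero]
        rfl
      rw [h2]
      exact genAlexSubgroup_zpow_mem φ _ _ ((genAlexSubgroup φ).inv_mem ha) }
  have hL : ∀ y : G, R.e y ∈ L := by
    intro y
    show R.act 1 (R.e y) ∈ genAlexSubgroup φ
    rw [genAlex_act_e, one_mul]
    exact Subgroup.subset_closure ⟨y, rfl⟩
  have htop : Subgroup.closure (Set.range R.e) = ⊤ :=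
    PresentedGroup.closure_range_of _
  intro g
  have hg : g ∈ Subgroup.closure (Set.range R.e) := htop ▸ Subgroup.mem_top g
  exact (Subgroup.closure_le L).mpr (by rintro _ ⟨y, rfl⟩; exact hL y) hg

lemma genAlex_surj :
    ∀ h ∈ genAlexSubgroup φ, ∃ g : (genAlexander φ).toRackStr.As,
      (genAlexander φ).toRackStr.epsAs g = 1 ∧
        (genAlexander φ).toRackStr.act 1 g = h := by
  set R := (genAlexander φ).toRackStr with hR
  intro h hh
  refine Subgroup.closure_induction ?_ ?_ ?_ ?_ hh
  · rintro _ ⟨y, rfl⟩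
    refine ⟨(R.e 1)⁻¹ * R.e y, ?_, ?_⟩
    · rw [map_mul, map_inv, R.epsAs_e, R.epsAs_e, inv_mul_cancel]
    · have he1 : R.act 1 (R.e 1)⁻¹ = 1 := by
        apply φ.injective
        have : R.act (R.act 1 (R.e 1)⁻¹) (R.e 1) = 1 := by
          rw [← R.act_mul, inv_mul_cancel, R.act_one]
        rw [genAlex_act_e] at this
        simpa using this
      rw [R.act_mul, he1, genAlex_act_e, one_mul]
  · exact ⟨1, by rw [map_one], by rw [R.act_one]⟩
  · rintro x y _ _ ⟨g, hg1, hg2⟩ ⟨g', hg1', hg2'⟩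
    refine ⟨g * g', by rw [map_mul, hg1, hg1', mul_one], ?_⟩
    rw [R.act_mul, hg2, genAlex_act_eq φ g' x, hg1', hg2']
    simp
  · rintro x _ ⟨g, hg1, hg2⟩
    refine ⟨g⁻¹, by rw [map_inv, hg1, inv_one], ?_⟩
    have key : R.act 1 g⁻¹ * x = 1 := by
      have h1 : R.act (R.act 1 g⁻¹) g = 1 := by
        rw [← R.act_mul, inv_mul_cancel, R.act_one]
      rw [genAlex_act_eq φ g (R.act 1 g⁻¹), hg1, hg2] at h1
      simpa using h1
    exact eq_inv_of_mul_eq_one_left key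

lemma genAlex_mem_inn0_act (f : (Equiv.Perm G)ᵐᵒᵖ)
    (hf : f ∈ (genAlexander φ).toRackStr.Inn0) (x : G) :
    f.unop x = x * f.unop 1 := by
  set R := (genAlexander φ).toRackStr with hR
  obtain ⟨g, hg, rfl⟩ := Subgroup.mem_map.mp hf
  have hg1 : R.epsAs g = 1 := hg
  have heps : Multiplicative.toAdd (R.epsAs g) = 0 := by
    rw [hg1]; rfl
  have h1 : (R.psi g).unop x = R.act x g := rfl
  have h2 : (R.psi g).unop 1 = R.act 1 g := rfl
  rw [h1, h2, genAlex_act_eq φ g x, heps, zpow_zero]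
  rfl

end Proof11

/-- For a group `G` with automorphism `φ` and
`H = ⟨φ(g⁻¹)g⟩`, every `f ∈ Inn₀(Q_{G,φ})` acts as right multiplication by
`f(1)`, and `f ↦ f(1)` is a group isomorphism `Inn₀(Q_{G,φ}) ≅ H`. -/
theorem genAlexander_inn0_iso (G : Type u) [Group G] (φ : G ≃* G) :
    (∀ f ∈ (genAlexander φ).toRackStr.Inn0, ∀ x : G,
        f.unop x = x * f.unop 1) ∧
    ∃ e : ↥(genAlexander φ).toRackStr.Inn0 ≃* ↥(genAlexSubgroup φ),
      ∀ f : ↥(genAlexander φ).toRackStr.Inn0,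
        (e f : G) = (f : (Equiv.Perm G)ᵐᵒᵖ).unop 1 := by
  constructor
  · intro f hf x
    exact genAlex_mem_inn0_act φ f hf x
  · set R := (genAlexander φ).toRackStr with hR
    have hmem : ∀ f : ↥R.Inn0,
        ((f : (Equiv.Perm G)ᵐᵒᵖ).unop 1) ∈ genAlexSubgroup φ := by
      intro f
      obtain ⟨g, _, hpsi⟩ := f.2
      rw [← hpsi]
      exact genAlex_act_one_mem φ g
    let Φ : ↥R.Inn0 →* ↥(genAlexSubgroup φ) :=
    { toFun := fun f => ⟨(f : (Equiv.Perm G)ᵐᵒᵖ).unop 1, hmem f⟩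
      map_one' := rfl
      map_mul' := by
        intro f f'
        apply Subtype.ext
        show ((f : (Equiv.Perm G)ᵐᵒᵖ) * (f' : (Equiv.Perm G)ᵐᵒᵖ)).unop 1
          = (f : (Equiv.Perm G)ᵐᵒᵖ).unop 1 * (f' : (Equiv.Perm G)ᵐᵒᵖ).unop 1
        have h1 : ((f : (Equiv.Perm G)ᵐᵒᵖ) * (f' : (Equiv.Perm G)ᵐᵒᵖ)).unop 1
            = (f' : (Equiv.Perm G)ᵐᵒᵖ).unop ((f : (Equiv.Perm G)ᵐᵒᵖ).unop 1) := rfl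
        rw [h1, genAlex_mem_inn0_act φ _ f'.2 ((f : (Equiv.Perm G)ᵐᵒᵖ).unop 1)] }
    have hinj : Function.Injective Φ := by
      intro f f' hff
      have h1 : (f : (Equiv.Perm G)ᵐᵒᵖ).unop 1 = (f' : (Equiv.Perm G)ᵐᵒᵖ).unop 1 :=
        congrArg Subtype.val hff
      apply Subtype.ext
      apply MulOpposite.unop_injective
      apply Equiv.ext
      intro x
      rw [genAlex_mem_inn0_act φ _ f.2 x, genAlex_mem_inn0_act φ _ f'.2 x, h1]
    have hsurj : Function.Surjective Φ := by
      rintro ⟨h, hh⟩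
      obtain ⟨g, hg1, hg2⟩ := genAlex_surj φ h hh
      refine ⟨⟨R.psi g, Subgroup.mem_map.mpr ⟨g, MonoidHom.mem_ker.mpr hg1, rfl⟩⟩, ?_⟩
      exact Subtype.ext hg2
    exact ⟨MulEquiv.ofBijective Φ ⟨hinj, hsurj⟩, fun f => rfl⟩
end
end

section
/- Let G be a group, φ an automorphism of G, and H the subgroup of G generated by the elements φ(g⁻¹)g for all g ∈ G. Then the connected component of any x in the generalized Alexander quandle Q_{G,φ} (its orbit under Inn(Q_{G,φ})) is the right coset xH; consequently, Q_{G,φ} is connected if and only if H = G. -/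
/-!  Core framework: racks/quandles with right operation, inner automorphism group
(with opposite composition, acting on the right), associated group. -/

universe u v

noncomputable section

section Aux

variable {G : Type u} [Group G] (φ : G ≃* G)

lemma genAlex_gen_mem (g : G) : φ g⁻¹ * g ∈ genAlexSubgroup φ :=
  Subgroup.subset_closure ⟨g, rfl⟩

/-- The subgroup `H` is normal. -/
lemma genAlexSubgroup_normal : (genAlexSubgroup φ).Normal := by
  constructor
  intro n hn a
  induction hn using Subgroup.closure_induction with
  | one => simpa using (genAlexSubgroup φ).one_mem
  | mul h₁ h₂ _ _ ih₁ ih₂ =>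
      have : a * (h₁ * h₂) * a⁻¹ = (a * h₁ * a⁻¹) * (a * h₂ * a⁻¹) := by group
      rw [this]; exact Subgroup.mul_mem _ ih₁ ih₂
  | inv h _ ih =>
      have : a * h⁻¹ * a⁻¹ = (a * h * a⁻¹)⁻¹ := by group
      rw [this]; exact Subgroup.inv_mem _ ih
  | mem h hh =>
      obtain ⟨g, rfl⟩ := hh
      have key : a * (φ g⁻¹ * g) * a⁻¹ =
          (φ a * a⁻¹)⁻¹ * (φ (a * g⁻¹) * (g * a⁻¹)) := by
        simp only [map_mul, map_inv]
        group
      rw [key]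
      refine Subgroup.mul_mem _ (Subgroup.inv_mem _ ?_) ?_
      · simpa using genAlex_gen_mem φ a⁻¹
      · have := genAlex_gen_mem φ (g * a⁻¹)
        simpa [mul_inv_rev, map_mul, map_inv, mul_assoc] using this

/-- The subgroup of the associated group of elements moving every point within
its right `H`-coset. -/
def genAlexAsSub : Subgroup (genAlexander φ).toRackStr.As where
  carrier := { g | ∀ x : G,
    (genAlexander φ).toRackStr.act x g * x⁻¹ ∈ genAlexSubgroup φ }
  one_mem' := by intro x; simpa using (genAlexSubgroup φ).one_mem
  mul_mem' := by
    intro a b ha hb x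
    rw [RackStr.act_mul]
    have h1 := hb ((genAlexander φ).toRackStr.act x a)
    have h2 := ha x
    have key : (genAlexander φ).toRackStr.act
          ((genAlexander φ).toRackStr.act x a) b * x⁻¹ =
        ((genAlexander φ).toRackStr.act ((genAlexander φ).toRackStr.act x a) b *
          ((genAlexander φ).toRackStr.act x a)⁻¹) *
          ((genAlexander φ).toRackStr.act x a * x⁻¹) := by group
    rw [key]
    exact Subgroup.mul_mem _ h1 h2
  inv_mem' := by
    intro a ha x
    have h1 := ha ((genAlexander φ).toRackStr.act x a⁻¹)
    rw [← RackStr.act_mul, inv_mul_cancel, RackStr.act_one] at h1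
    have h2 : (genAlexander φ).toRackStr.act x a⁻¹ * x⁻¹ =
        (x * ((genAlexander φ).toRackStr.act x a⁻¹)⁻¹)⁻¹ := by group
    rw [h2]
    exact Subgroup.inv_mem _ h1

/-- Every element of the orbit of `x` lies in `Hx`. -/
lemma genAlex_act_mem (x : G) (g : (genAlexander φ).toRackStr.As) :
    (genAlexander φ).toRackStr.act x g * x⁻¹ ∈ genAlexSubgroup φ := by
  have hS : genAlexAsSub φ = ⊤ := by
    erw [eq_top_iff, ← PresentedGroup.closure_range_of (genAlexander φ).toRackStr.rels,
      Subgroup.closure_le]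
    rintro - ⟨y, rfl⟩
    intro z
    show (genAlexander φ).toRackStr.act z ((genAlexander φ).toRackStr.e y) * z⁻¹ ∈
      genAlexSubgroup φ
    rw [RackStr.act_e, genAlex_op]
    have := genAlex_gen_mem φ (y * z⁻¹)
    simpa [mul_inv_rev, mul_assoc] using this
  exact (hS ▸ Subgroup.mem_top g : g ∈ genAlexAsSub φ) x

/-- Every element of `Hx` lies in the orbit of `x`. -/
lemma genAlex_coset_sub (h : G) (hh : h ∈ genAlexSubgroup φ) :
    ∀ x : G, ∃ g : (genAlexander φ).toRackStr.As,
      (genAlexander φ).toRackStr.act x g = h * x := by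
  induction hh using Subgroup.closure_induction with
  | one => exact fun x => ⟨1, by simp⟩
  | mul h₁ h₂ _ _ ih₁ ih₂ =>
      intro x
      obtain ⟨g₂, hg₂⟩ := ih₂ x
      obtain ⟨g₁, hg₁⟩ := ih₁ (h₂ * x)
      exact ⟨g₂ * g₁, by rw [RackStr.act_mul, hg₂, hg₁, mul_assoc]⟩
  | inv h _ ih =>
      intro x
      obtain ⟨g, hg⟩ := ih (h⁻¹ * x)
      refine ⟨g⁻¹, ?_⟩
      rw [mul_inv_cancel_left] at hg
      conv_lhs => rw [← hg]
      rw [← RackStr.act_mul, mul_inv_cancel, RackStr.act_one]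
  | mem h hh =>
      obtain ⟨g, rfl⟩ := hh
      intro x
      refine ⟨(genAlexander φ).toRackStr.e (g * x), ?_⟩
      rw [RackStr.act_e, genAlex_op]
      simp [mul_inv_rev, mul_assoc]

end Aux

/-- For the generalized Alexander quandle `Q_{G,φ}` and
`H = ⟨φ(g⁻¹)g⟩`, the connected component (orbit) of any `x` is the right coset
`xH`; consequently `Q_{G,φ}` is connected iff `H = G`. -/

theorem genAlexander_orbit_eq_coset (G : Type u) [Group G] (φ : G ≃* G) :
    (∀ x : G, { y : G | ∃ g : (genAlexander φ).toRackStr.As,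
        (genAlexander φ).toRackStr.act x g = y } =
      (fun h => x * h) '' (genAlexSubgroup φ : Set G)) ∧
    ((genAlexander φ).toRackStr.IsConnected ↔ genAlexSubgroup φ = ⊤) := by
  haveI hnorm : (genAlexSubgroup φ).Normal := genAlexSubgroup_normal φ
  constructor
  · intro x
    ext y
    simp only [Set.mem_setOf_eq, Set.mem_image, SetLike.mem_coe]
    constructor
    · rintro ⟨g, rfl⟩
      refine ⟨x⁻¹ * (genAlexander φ).toRackStr.act x g, ?_, by group⟩
      have := hnorm.conj_mem _ (genAlex_act_mem φ x g) x⁻¹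
      simpa [mul_assoc] using this
    · rintro ⟨h, hh, rfl⟩
      obtain ⟨g, hg⟩ := genAlex_coset_sub φ (x * h * x⁻¹)
        (hnorm.conj_mem _ hh x) x
      exact ⟨g, by simpa [mul_assoc] using hg⟩
  · constructor
    · intro hc
      rw [eq_top_iff]
      intro y _
      obtain ⟨g, hg⟩ := hc 1 y
      have := genAlex_act_mem φ 1 g
      rw [hg] at this
      simpa using this
    · intro htop x y
      obtain ⟨g, hg⟩ := genAlex_coset_sub φ (y * x⁻¹) (htop ▸ Subgroup.mem_top _) x
      exact ⟨g, by simpa [mul_assoc] using hg⟩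
end
end

section
/- Let G be a group and φ an automorphism of G. If the generalized Alexander quandle Q_{G,φ} is connected, then the endomorphism of the abelianization G_ab induced by 1−φ (sending the class of g to the class of gφ(g)⁻¹) is surjective. -/
/-!  Core framework: racks/quandles with right operation, inner automorphism group
(with opposite composition, acting on the right), associated group. -/

universe u v

noncomputable section

section AuxProof

variable {G : Type u} [Group G] (φ : G ≃* G)

private lemma aux_symm_map (x : Abelianization G) :
    Abelianization.map φ.symm.toMonoidHom (Abelianization.map φ.toMonoidHom x) = x := by
  induction x using QuotientGroup.induction_on with
  | _ g =>
    show Abelianization.map φ.symm.toMonoidHom (Abelianization.map φ.toMonoidHom (Abelianization.of g)) = Abelianization.of g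
    simp [Abelianization.map_of]

private lemma aux_map_symm (x : Abelianization G) :
    Abelianization.map φ.toMonoidHom (Abelianization.map φ.symm.toMonoidHom x) = x := by
  induction x using QuotientGroup.induction_on with
  | _ g =>
    show Abelianization.map φ.toMonoidHom (Abelianization.map φ.symm.toMonoidHom (Abelianization.of g)) = Abelianization.of g
    simp [Abelianization.map_of]

private lemma aux_F_apply (x : Abelianization G) :
    ((MonoidHom.id (Abelianization G)) * (Abelianization.map φ.toMonoidHom)⁻¹) x
      = x * (Abelianization.map φ.toMonoidHom x)⁻¹ := rfl

end AuxProof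

/-- If the generalized Alexander quandle `Q_{G,φ}` is
connected, then the endomorphism of `G_ab` induced by `1-φ` (sending the class
of `g` to the class of `g·φ(g)⁻¹`) is surjective. -/
theorem genAlexander_oneSubPhi_surjective (G : Type u) [Group G] (φ : G ≃* G)
    (hconn : (genAlexander φ).toRackStr.IsConnected) :
    Function.Surjective
      ((MonoidHom.id (Abelianization G)) * (Abelianization.map φ.toMonoidHom)⁻¹) := by
  set R := (genAlexander φ).toRackStr with hR
  set F : Abelianization G →* Abelianization G :=
    (MonoidHom.id (Abelianization G)) * (Abelianization.map φ.toMonoidHom)⁻¹ with hF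
  set pb : Abelianization G →* Abelianization G := Abelianization.map φ.toMonoidHom with hpb
  set pbi : Abelianization G →* Abelianization G := Abelianization.map φ.symm.toMonoidHom
    with hpbi
  have hFx : ∀ x, F x = x * (pb x)⁻¹ := fun x => rfl
  set H : Subgroup (Abelianization G) := F.range with hH
  -- stability of H under pb and pbi
  have hstab : ∀ a ∈ H, pb a ∈ H := by
    rintro a ⟨b, rfl⟩
    exact ⟨pb b, by rw [hFx, hFx, map_mul, map_inv]⟩
  have hstabi : ∀ a ∈ H, pbi a ∈ H := by
    rintro a ⟨b, rfl⟩
    refine ⟨pbi b, ?_⟩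
    rw [hFx, hFx, map_mul, map_inv, hpb, hpbi, aux_map_symm, aux_symm_map]
  -- class of op
  have hop : ∀ x y : G, Abelianization.of (R.op x y)
      = pb (Abelianization.of x) * F (Abelianization.of y) := by
    intro x y
    show Abelianization.of (φ (x * y⁻¹) * y) = _
    rw [hFx]
    simp only [map_mul, map_inv, hpb, Abelianization.map_of, MulEquiv.coe_toMonoidHom]
    rw [mul_comm (Abelianization.of y), mul_assoc]
  have key : ∀ x y : G,
      (Abelianization.of x ∈ H ↔ Abelianization.of (R.op x y) ∈ H) := by
    intro x y
    rw [hop]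
    constructor
    · intro hx
      exact H.mul_mem (hstab _ hx) ⟨Abelianization.of y, rfl⟩
    · intro hxy
      have h1 : pb (Abelianization.of x) ∈ H := by
        have := H.mul_mem hxy (H.inv_mem ⟨Abelianization.of y, rfl⟩)
        simpa using this
      have := hstabi _ h1
      rwa [hpbi, hpb, aux_symm_map] at this
  -- main: for all g in As, x : G, the iff
  have main : ∀ g : R.As, ∀ x : G,
      (Abelianization.of x ∈ H ↔ Abelianization.of (R.act x g) ∈ H) := by
    intro g
    have hg : g ∈ Subgroup.closure (Set.range (PresentedGroup.of :
        G → PresentedGroup R.rels)) := by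
      rw [PresentedGroup.closure_range_of]; trivial
    refine Subgroup.closure_induction ?_ ?_ ?_ ?_ hg
    · rintro g ⟨y, rfl⟩ x
      have : R.act x (R.e y) = R.op x y := R.act_e x y
      rw [show (PresentedGroup.of y : R.As) = R.e y from rfl, this]
      exact key x y
    · intro x; simp
    · intro a b _ _ ha hb x
      rw [R.act_mul]
      exact (ha x).trans (hb (R.act x a))
    · intro a _ ha x
      have h2 := ha (R.act x a⁻¹)
      rw [← R.act_mul, inv_mul_cancel, R.act_one] at h2
      exact h2.symm
  -- conclude
  intro a
  induction a using QuotientGroup.induction_on with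
  | _ g =>
    obtain ⟨as, has⟩ := hconn 1 g
    have h1 : Abelianization.of (1 : G) ∈ H := by rw [map_one]; exact H.one_mem
    have := (main as 1).mp h1
    rw [has] at this
    exact this
end
end

section
/- Let X be a connected quandle, x₀ ∈ X, and let σ be the automorphism of the abelianization Inn₀(X)_ab induced by the conjugation f ↦ s_{x₀}⁻¹ f s_{x₀} of Inn₀(X). Then the endomorphism 1−σ of Inn₀(X)_ab is surjective. -/
/-!  Core framework: racks/quandles with right operation, inner automorphism group
(with opposite composition, acting on the right), associated group. -/

universe u v

noncomputable section

/-! Products of quandles, and the conjugation automorphism `σ` of `Inn₀`. -/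

section ProdQuandle

variable {X : Type u} {Y : Type v}

/-- The product quandle: the quandle operation is defined componentwise. -/
def prodQuandle (Q : QuandleStr X) (Q' : QuandleStr Y) : QuandleStr (X × Y) where
  op p q := (Q.op p.1 q.1, Q'.op p.2 q.2)
  bij q := ((Q.toRackStr.s q.1).prodCongr (Q'.toRackStr.s q.2)).bijective
  distrib p q r := Prod.ext (Q.distrib p.1 q.1 r.1) (Q'.distrib p.2 q.2 r.2)
  idem p := Prod.ext (Q.idem p.1) (Q'.idem p.2)

end ProdQuandle

namespace RackStr

variable {X : Type u} (R : RackStr X)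

lemma conj_mem_Inn0 (x₀ : X) {f : (Equiv.Perm X)ᵐᵒᵖ} (hf : f ∈ R.Inn0) :
    (R.sop x₀)⁻¹ * f * R.sop x₀ ∈ R.Inn0 := by
  obtain ⟨g, hg, rfl⟩ := hf
  refine ⟨(R.e x₀)⁻¹ * g * R.e x₀, ?_, by rw [map_mul, map_mul, map_inv, psi_e]⟩
  have hg' : R.epsAs g = 1 := hg
  show R.epsAs ((R.e x₀)⁻¹ * g * R.e x₀) = 1
  rw [map_mul, map_mul, map_inv, hg', mul_one, inv_mul_cancel]

lemma conj_mem_Inn0' (x₀ : X) {f : (Equiv.Perm X)ᵐᵒᵖ} (hf : f ∈ R.Inn0) :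
    R.sop x₀ * f * (R.sop x₀)⁻¹ ∈ R.Inn0 := by
  obtain ⟨g, hg, rfl⟩ := hf
  refine ⟨R.e x₀ * g * (R.e x₀)⁻¹, ?_, by rw [map_mul, map_mul, map_inv, psi_e]⟩
  have hg' : R.epsAs g = 1 := hg
  show R.epsAs (R.e x₀ * g * (R.e x₀)⁻¹) = 1
  rw [map_mul, map_mul, map_inv, hg', mul_one, mul_inv_cancel]

/-- The automorphism `σ : f ↦ s_{x₀}⁻¹ f s_{x₀}` of `Inn₀(X)`. -/
def sigmaInn0 (x₀ : X) : ↥R.Inn0 ≃* ↥R.Inn0 where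
  toFun f := ⟨(R.sop x₀)⁻¹ * f * R.sop x₀, R.conj_mem_Inn0 x₀ f.2⟩
  invFun f := ⟨R.sop x₀ * f * (R.sop x₀)⁻¹, R.conj_mem_Inn0' x₀ f.2⟩
  left_inv f := by
    apply Subtype.ext
    simp [mul_assoc]
  right_inv f := by
    apply Subtype.ext
    simp [mul_assoc]
  map_mul' f g := by
    apply Subtype.ext
    simp [mul_assoc]

/-- The automorphism induced by `σ` on the abelianization `Inn₀(X)_ab`. -/
def sigmaAb (x₀ : X) : Abelianization ↥R.Inn0 →* Abelianization ↥R.Inn0 :=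
  Abelianization.map (R.sigmaInn0 x₀).toMonoidHom

/-- `σ` on `Inn₀(X)_ab`, as a `ℤ`-linear map (additively). -/
def sigmaAbLin (x₀ : X) :
    Additive (Abelianization ↥R.Inn0) →ₗ[ℤ] Additive (Abelianization ↥R.Inn0) :=
  (MonoidHom.toAdditive (R.sigmaAb x₀)).toIntLinearMap

end RackStr

namespace RackStr

variable {X : Type u} (R : RackStr X)

/-- `s_{y · g} = ψ(g)⁻¹ s_y ψ(g)`. -/
lemma sop_act (g : R.As) (y : X) :
    R.sop (R.act y g) = (R.psi g)⁻¹ * R.sop y * R.psi g := by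
  induction g using PresentedGroup.induction_on with
  | H w =>
    induction w using FreeGroup.induction_on generalizing y with
    | C1 =>
      show R.sop (R.act y (1 : R.As)) = (R.psi (1 : R.As))⁻¹ * R.sop y * R.psi (1 : R.As)
      simp only [map_one, act_one, inv_one, one_mul, mul_one]
    | of x =>
      have h1 : PresentedGroup.mk R.rels (FreeGroup.of x) = R.e x := rfl
      rw [h1, act_e, psi_e]
      have := R.sop_rel y x
      rw [mul_assoc, this, ← mul_assoc, inv_mul_cancel, one_mul]
    | inv_of x ih =>
      have h1 : PresentedGroup.mk R.rels (FreeGroup.of x) = R.e x := rfl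
      rw [h1] at ih
      show R.sop (R.act y (R.e x)⁻¹) = (R.psi (R.e x)⁻¹)⁻¹ * R.sop y * R.psi (R.e x)⁻¹
      set y' := R.act y (R.e x)⁻¹ with hy'
      have hyy : R.act y' (R.e x) = y := by
        rw [hy', ← act_mul, inv_mul_cancel, act_one]
      have h2 := ih y'
      rw [hyy] at h2
      rw [h2, map_inv]
      group
    | mul w₁ w₂ ih₁ ih₂ =>
      have hmul : (PresentedGroup.mk R.rels (w₁ * w₂) : R.As) =
          HMul.hMul (α := R.As) (β := R.As) (γ := R.As) (PresentedGroup.mk R.rels w₁)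
            (PresentedGroup.mk R.rels w₂) := map_mul _ _ _
      have hpm : R.psi (HMul.hMul (α := R.As) (β := R.As) (γ := R.As) (PresentedGroup.mk R.rels w₁)
          (PresentedGroup.mk R.rels w₂)) =
          R.psi (PresentedGroup.mk R.rels w₁) * R.psi (PresentedGroup.mk R.rels w₂) := map_mul _ _ _
      rw [hmul, R.act_mul y (PresentedGroup.mk R.rels w₁) (PresentedGroup.mk R.rels w₂), ih₂, ih₁,
        hpm]
      group

lemma act_e_zpow (x : X) (hidem : R.op x x = x) (k : ℤ) :
    R.act x ((R.e x) ^ k) = x := by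
  have hmem : R.sop x ∈ fixedSub x := by
    show (R.s x) x = x
    simpa using hidem
  have : R.psi ((R.e x) ^ k) ∈ fixedSub x := by
    rw [map_zpow, psi_e]
    exact Subgroup.zpow_mem _ hmem k
  exact this

/-- For a connected quandle, every `s_x` is conjugate to `s_{x₀}` by an element
of the kernel of `ε`. -/
lemma exists_conj (hconn : R.IsConnected) (hidem : ∀ x, R.op x x = x)
    (x₀ x : X) : ∃ g : R.As, R.epsAs g = 1 ∧
      R.sop x = (R.psi g)⁻¹ * R.sop x₀ * R.psi g := by
  obtain ⟨g, hg⟩ := hconn x₀ x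
  set m : ℤ := Multiplicative.toAdd (R.epsAs g) with hm
  refine ⟨g * (R.e x) ^ (-m), ?_, ?_⟩
  · rw [map_mul, map_zpow, epsAs_e]
    apply Multiplicative.toAdd.injective
    simp [← hm]
  · have hact : R.act x₀ (g * (R.e x) ^ (-m)) = x := by
      rw [act_mul, hg, R.act_e_zpow x (hidem x)]
    conv_lhs => rw [← hact]
    exact R.sop_act _ x₀

end RackStr

section Proof19

variable {X : Type u} (Q : QuandleStr X) (x₀ : X)

local notation "R" => Q.toRackStr

/-- membership of `ψ(g) s₀^{-ε(g)}` in `Inn₀`. -/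
lemma Proof19.hmem (g : (R).As) :
    (R).psi g * ((R).sop x₀) ^ (-(Multiplicative.toAdd ((R).epsAs g))) ∈ (R).Inn0 := by
  refine ⟨g * ((R).e x₀) ^ (-(Multiplicative.toAdd ((R).epsAs g))), ?_, ?_⟩
  · show (R).epsAs _ = 1
    rw [map_mul, map_zpow, RackStr.epsAs_e]
    apply Multiplicative.toAdd.injective
    simp
  · rw [map_mul, map_zpow, RackStr.psi_e]

lemma Proof19.conj_zpow_mem (k : ℤ) {p : (Equiv.Perm X)ᵐᵒᵖ} (hp : p ∈ (R).Inn0) :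
    ((R).sop x₀) ^ k * p * ((R).sop x₀) ^ (-k) ∈ (R).Inn0 := by
  obtain ⟨g, hg, rfl⟩ := hp
  refine ⟨((R).e x₀) ^ k * g * ((R).e x₀) ^ (-k), ?_, ?_⟩
  · show (R).epsAs _ = 1
    have hg' : (R).epsAs g = 1 := hg
    rw [map_mul, map_mul, map_zpow, map_zpow, RackStr.epsAs_e, hg']
    apply Multiplicative.toAdd.injective
    simp
  · rw [map_mul, map_mul, map_zpow, map_zpow, RackStr.psi_e]

end Proof19

/-- For a connected quandle `X` and `x₀ ∈ X`, the
endomorphism `1-σ` of `Inn₀(X)_ab` (where `σ` is induced by the conjugation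
`f ↦ s_{x₀}⁻¹ f s_{x₀}`) is surjective. -/
theorem oneSubSigma_surjective (X : Type u) (Q : QuandleStr X)
    (hconn : Q.toRackStr.IsConnected) (x₀ : X) :
    Function.Surjective
      ((MonoidHom.id (Abelianization ↥Q.toRackStr.Inn0)) *
        (Q.toRackStr.sigmaAb x₀)⁻¹) := by
  classical
  set φ := (MonoidHom.id (Abelianization ↥Q.toRackStr.Inn0)) *
      (Q.toRackStr.sigmaAb x₀)⁻¹ with hφ
  rw [← MonoidHom.range_eq_top]
  refine (Subgroup.eq_top_iff' _).mpr ?_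
  set N := φ.range with hN
  set π := QuotientGroup.mk' N with hπ
  set s₀ := Q.toRackStr.sop x₀ with hs₀
  -- it suffices to show the quotient by the range is trivial
  suffices htriv : ∀ a : Abelianization ↥Q.toRackStr.Inn0, π a = 1 by
    intro a
    exact (QuotientGroup.eq_one_iff a).mp (htriv a)
  -- key fact 1 : π kills the difference between `f` and `σ f`
  have key1 : ∀ b : ↥Q.toRackStr.Inn0,
      π (Abelianization.of (Q.toRackStr.sigmaInn0 x₀ b)) = π (Abelianization.of b) := by
    intro b
    have h1 : Abelianization.of b *
        (Abelianization.of (Q.toRackStr.sigmaInn0 x₀ b))⁻¹ ∈ N := by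
      refine ⟨Abelianization.of b, ?_⟩
      simp only [hφ, MonoidHom.mul_apply, MonoidHom.inv_apply, MonoidHom.id_apply,
        RackStr.sigmaAb, Abelianization.map_of, MulEquiv.coe_toMonoidHom]
    have h2 : π (Abelianization.of b *
        (Abelianization.of (Q.toRackStr.sigmaInn0 x₀ b))⁻¹) = 1 :=
      (QuotientGroup.eq_one_iff _).mpr h1
    rw [map_mul, map_inv] at h2
    exact (mul_inv_eq_one.mp h2).symm
  have key2 : ∀ b : ↥Q.toRackStr.Inn0,
      π (Abelianization.of ((Q.toRackStr.sigmaInn0 x₀).symm b)) = π (Abelianization.of b) := by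
    intro b
    have := key1 ((Q.toRackStr.sigmaInn0 x₀).symm b)
    rw [MulEquiv.apply_symm_apply] at this
    exact this.symm
  -- transport lemmas along equalities of underlying permutations
  have Peq : ∀ {p q : (Equiv.Perm X)ᵐᵒᵖ} (hp : p ∈ Q.toRackStr.Inn0)
      (hq : q ∈ Q.toRackStr.Inn0), p = q →
      π (Abelianization.of ⟨p, hp⟩) = π (Abelianization.of ⟨q, hq⟩) := by
    intro p q hp hq h
    subst h
    rfl
  have Pmul : ∀ (a b : ↥Q.toRackStr.Inn0) {p : (Equiv.Perm X)ᵐᵒᵖ}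
      (hp : p ∈ Q.toRackStr.Inn0),
      p = (a : (Equiv.Perm X)ᵐᵒᵖ) * (b : (Equiv.Perm X)ᵐᵒᵖ) →
      π (Abelianization.of ⟨p, hp⟩) =
        π (Abelianization.of a) * π (Abelianization.of b) := by
    intro a b p hp h
    subst h
    have h3 : (⟨(a : (Equiv.Perm X)ᵐᵒᵖ) * (b : (Equiv.Perm X)ᵐᵒᵖ), hp⟩ :
        ↥Q.toRackStr.Inn0) = a * b := rfl
    rw [h3, map_mul, map_mul]
  -- conjugation by `s₀ ^ k` does not change the class mod N
  have hL : ∀ (k : ℤ) (p : (Equiv.Perm X)ᵐᵒᵖ) (hp : p ∈ Q.toRackStr.Inn0)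
      (hp' : s₀ ^ k * p * s₀ ^ (-k) ∈ Q.toRackStr.Inn0),
      π (Abelianization.of ⟨s₀ ^ k * p * s₀ ^ (-k), hp'⟩) =
        π (Abelianization.of ⟨p, hp⟩) := by
    intro k
    induction k using Int.induction_on with
    | zero =>
      intro p hp hp'
      exact Peq hp' hp (by simp)
    | succ k ih =>
      intro p hp hp'
      have hm : s₀ ^ (k : ℤ) * p * s₀ ^ (-(k : ℤ)) ∈ Q.toRackStr.Inn0 :=
        Proof19.conj_zpow_mem Q x₀ k hp
      have hv : s₀ ^ ((k : ℤ) + 1) * p * s₀ ^ (-((k : ℤ) + 1)) =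
          s₀ * (s₀ ^ (k : ℤ) * p * s₀ ^ (-(k : ℤ))) * s₀⁻¹ := by
        group
      have hm' : s₀ * (s₀ ^ (k : ℤ) * p * s₀ ^ (-(k : ℤ))) * s₀⁻¹ ∈ Q.toRackStr.Inn0 :=
        hv ▸ hp'
      refine (Peq hp' hm' hv).trans ?_
      exact (key2 ⟨_, hm⟩).trans (ih p hp hm)
    | pred k ih =>
      intro p hp hp'
      have hm : s₀ ^ (-(k : ℤ)) * p * s₀ ^ (-(-(k : ℤ))) ∈ Q.toRackStr.Inn0 :=
        Proof19.conj_zpow_mem Q x₀ (-(k : ℤ)) hp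
      have hv : s₀ ^ (-(k : ℤ) - 1) * p * s₀ ^ (-(-(k : ℤ) - 1)) =
          s₀⁻¹ * (s₀ ^ (-(k : ℤ)) * p * s₀ ^ (-(-(k : ℤ)))) * s₀ := by
        group
      have hm' : s₀⁻¹ * (s₀ ^ (-(k : ℤ)) * p * s₀ ^ (-(-(k : ℤ)))) * s₀ ∈ Q.toRackStr.Inn0 :=
        hv ▸ hp'
      refine (Peq hp' hm' hv).trans ?_
      exact (key1 ⟨_, hm⟩).trans (ih p hp hm)
  -- the main induction
  have hmem := Proof19.hmem Q x₀
  have hfun : ∀ g : Q.toRackStr.As,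
      π (Abelianization.of ⟨Q.toRackStr.psi g *
        s₀ ^ (-(Multiplicative.toAdd (Q.toRackStr.epsAs g))), hmem g⟩) = 1 := by
    intro g
    induction g using PresentedGroup.induction_on with
    | H w =>
      induction w using FreeGroup.induction_on with
      | C1 =>
        have hval : Q.toRackStr.psi (PresentedGroup.mk Q.toRackStr.rels 1) *
            s₀ ^ (-(Multiplicative.toAdd (Q.toRackStr.epsAs
              (PresentedGroup.mk Q.toRackStr.rels 1)))) = 1 := by
          have h0 : PresentedGroup.mk Q.toRackStr.rels 1 = (1 : Q.toRackStr.As) := map_one _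
          rw [h0]
          simp
        have h1 : (1 : (Equiv.Perm X)ᵐᵒᵖ) ∈ Q.toRackStr.Inn0 := one_mem _
        refine (Peq (hmem _) h1 hval).trans ?_
        have h2 : (⟨(1 : (Equiv.Perm X)ᵐᵒᵖ), h1⟩ : ↥Q.toRackStr.Inn0) = 1 := rfl
        rw [h2, map_one, map_one]
      | of x =>
        obtain ⟨g', hε', hs⟩ := Q.toRackStr.exists_conj hconn Q.idem x₀ x
        have hg' : g' ∈ Q.toRackStr.epsAs.ker := MonoidHom.mem_ker.mpr hε'
        set q : ↥Q.toRackStr.Inn0 := ⟨Q.toRackStr.psi g', ⟨g', hg', rfl⟩⟩ with hq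
        have hval : Q.toRackStr.psi (PresentedGroup.mk Q.toRackStr.rels (pure x)) *
            s₀ ^ (-(Multiplicative.toAdd (Q.toRackStr.epsAs
              (PresentedGroup.mk Q.toRackStr.rels (pure x))))) =
            ((q⁻¹ : ↥Q.toRackStr.Inn0) : (Equiv.Perm X)ᵐᵒᵖ) *
              (((Q.toRackStr.sigmaInn0 x₀).symm q : ↥Q.toRackStr.Inn0) :
                (Equiv.Perm X)ᵐᵒᵖ) := by
          have h1 : PresentedGroup.mk Q.toRackStr.rels (pure x) = Q.toRackStr.e x := rfl
          rw [h1, Q.toRackStr.psi_e, Q.toRackStr.epsAs_e]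
          show Q.toRackStr.sop x * s₀ ^ (-(1 : ℤ)) =
            (Q.toRackStr.psi g')⁻¹ * (s₀ * Q.toRackStr.psi g' * s₀⁻¹)
          rw [hs₀, hs]
          group
        refine (Pmul q⁻¹ ((Q.toRackStr.sigmaInn0 x₀).symm q) (hmem _) hval).trans ?_
        rw [key2 q, map_inv, map_inv, inv_mul_cancel]
      | inv_of x ihx =>
        obtain ⟨g', hε', hs⟩ := Q.toRackStr.exists_conj hconn Q.idem x₀ x
        have hg' : g' ∈ Q.toRackStr.epsAs.ker := MonoidHom.mem_ker.mpr hε'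
        set q : ↥Q.toRackStr.Inn0 := ⟨Q.toRackStr.psi g', ⟨g', hg', rfl⟩⟩ with hq
        have hval : Q.toRackStr.psi (PresentedGroup.mk Q.toRackStr.rels (pure x)⁻¹) *
            s₀ ^ (-(Multiplicative.toAdd (Q.toRackStr.epsAs
              (PresentedGroup.mk Q.toRackStr.rels (pure x)⁻¹)))) =
            ((q⁻¹ : ↥Q.toRackStr.Inn0) : (Equiv.Perm X)ᵐᵒᵖ) *
              ((Q.toRackStr.sigmaInn0 x₀ q : ↥Q.toRackStr.Inn0) :
                (Equiv.Perm X)ᵐᵒᵖ) := by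
          have h1 : PresentedGroup.mk Q.toRackStr.rels (pure x) = Q.toRackStr.e x := rfl
          show Q.toRackStr.psi (Q.toRackStr.e x)⁻¹ * s₀ ^ (-(Multiplicative.toAdd
            (Q.toRackStr.epsAs (Q.toRackStr.e x)⁻¹))) = _
          simp only [map_inv, Q.toRackStr.psi_e, Q.toRackStr.epsAs_e, toAdd_inv,
            toAdd_ofAdd, neg_neg, zpow_one]
          show (Q.toRackStr.sop x)⁻¹ * s₀ =
            (Q.toRackStr.psi g')⁻¹ * (s₀⁻¹ * Q.toRackStr.psi g' * s₀)
          rw [hs₀, hs]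
          group
        refine (Pmul q⁻¹ (Q.toRackStr.sigmaInn0 x₀ q) (hmem _) hval).trans ?_
        rw [key1 q, map_inv, map_inv, inv_mul_cancel]
      | mul w₁ w₂ ih₁ ih₂ =>
        set g₁ := PresentedGroup.mk Q.toRackStr.rels w₁ with hg₁
        set g₂ := PresentedGroup.mk Q.toRackStr.rels w₂ with hg₂
        set n₁ := Multiplicative.toAdd (Q.toRackStr.epsAs g₁) with hn₁
        set n₂ := Multiplicative.toAdd (Q.toRackStr.epsAs g₂) with hn₂
        have hM : s₀ ^ n₁ * (Q.toRackStr.psi g₂ * s₀ ^ (-n₂)) * s₀ ^ (-n₁) ∈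
            Q.toRackStr.Inn0 := Proof19.conj_zpow_mem Q x₀ n₁ (hmem g₂)
        have hval : Q.toRackStr.psi (PresentedGroup.mk Q.toRackStr.rels (w₁ * w₂)) *
            s₀ ^ (-(Multiplicative.toAdd (Q.toRackStr.epsAs
              (PresentedGroup.mk Q.toRackStr.rels (w₁ * w₂))))) =
            ((⟨Q.toRackStr.psi g₁ * s₀ ^ (-n₁), hmem g₁⟩ : ↥Q.toRackStr.Inn0) :
              (Equiv.Perm X)ᵐᵒᵖ) *
            ((⟨s₀ ^ n₁ * (Q.toRackStr.psi g₂ * s₀ ^ (-n₂)) * s₀ ^ (-n₁), hM⟩ :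
              ↥Q.toRackStr.Inn0) : (Equiv.Perm X)ᵐᵒᵖ) := by
          show Q.toRackStr.psi (PresentedGroup.mk Q.toRackStr.rels (w₁ * w₂)) *
            s₀ ^ (-(Multiplicative.toAdd (Q.toRackStr.epsAs
              (PresentedGroup.mk Q.toRackStr.rels (w₁ * w₂))))) =
            (Q.toRackStr.psi g₁ * s₀ ^ (-n₁)) *
              (s₀ ^ n₁ * (Q.toRackStr.psi g₂ * s₀ ^ (-n₂)) * s₀ ^ (-n₁))
          have hmul : (PresentedGroup.mk Q.toRackStr.rels (w₁ * w₂) : Q.toRackStr.As) =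
              HMul.hMul (α := Q.toRackStr.As) (β := Q.toRackStr.As) (γ := Q.toRackStr.As)
                g₁ g₂ := map_mul _ _ _
          have hpm : Q.toRackStr.psi (HMul.hMul (α := Q.toRackStr.As) (β := Q.toRackStr.As)
              (γ := Q.toRackStr.As) g₁ g₂) = Q.toRackStr.psi g₁ * Q.toRackStr.psi g₂ := map_mul _ _ _
          have hem : Q.toRackStr.epsAs (HMul.hMul (α := Q.toRackStr.As) (β := Q.toRackStr.As)
              (γ := Q.toRackStr.As) g₁ g₂) = Q.toRackStr.epsAs g₁ * Q.toRackStr.epsAs g₂ :=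
            map_mul _ _ _
          rw [hmul, hpm, hem, toAdd_mul, ← hn₁, ← hn₂]
          group
        refine (Pmul ⟨Q.toRackStr.psi g₁ * s₀ ^ (-n₁), hmem g₁⟩
          ⟨s₀ ^ n₁ * (Q.toRackStr.psi g₂ * s₀ ^ (-n₂)) * s₀ ^ (-n₁), hM⟩
          (hmem _) hval).trans ?_
        rw [ih₁, one_mul, hL n₁ _ (hmem g₂) hM, ih₂]
  -- conclude
  intro a
  obtain ⟨f, rfl⟩ := Quotient.exists_rep a
  obtain ⟨p, hp⟩ := f
  obtain ⟨g, hg, rfl⟩ := hp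
  have hval : Q.toRackStr.psi g *
      s₀ ^ (-(Multiplicative.toAdd (Q.toRackStr.epsAs g))) = Q.toRackStr.psi g := by
    have h0 : Q.toRackStr.epsAs g = 1 := hg
    rw [h0]
    simp
  exact (Peq _ (hmem g) hval.symm).trans (hfun g)
end
end
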